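/- arXiv:1610.08167 — 3 statements merged into one kernel-verified Lean document; each statement's English description precedes it below -/
import Mathlib

section
/- The family H_xor(n, m, 3) of affine maps over 𝔽₂, given by z ↦ b₀ ⊕ A·z where b₀ ∈ 𝔽₂^m and A ∈ 𝔽₂^{m×n} are chosen uniformly at random, is strongly 3-universal: for any three distinct keys z₁, z₂, z₃ ∈ 𝔽₂^n and any values v₁, v₂, v₃ ∈ 𝔽₂^m, the probability that h(zᵢ) = vᵢ for i = 1,2,3 equals 2^{-3m}. -/
open Finset

/-- Given two linearly independent vectors over a field, there is a linear map
taking prescribed values on them. -/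
lemma exists_linearMap_pair {K V W : Type*} [Field K] [AddCommGroup V] [Module K V]
    [AddCommGroup W] [Module K W] {u w : V} (h : LinearIndependent K ![u, w])
    (c1 c2 : W) : ∃ g : V →ₗ[K] W, g u = c1 ∧ g w = c2 := by
  classical
  have hs := (linearIndepOn_id_range_iff h.injective).mpr h
  have huw : u ≠ w := by
    intro he
    have := h.injective (show ![u,w] 0 = ![u,w] 1 by simpa using he)
    simp at this
  have hu : u ∈ hs.extend (Set.subset_univ _) := hs.subset_extend _ ⟨0, rfl⟩
  have hw : w ∈ hs.extend (Set.subset_univ _) := hs.subset_extend _ ⟨1, rfl⟩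
  let f : hs.extend (Set.subset_univ _) → W :=
    fun x => if (x : V) = u then c1 else if (x : V) = w then c2 else 0
  refine ⟨(Module.Basis.extend hs).constr K f, ?_, ?_⟩
  · have h1 := (Module.Basis.extend hs).constr_basis K f ⟨u, hu⟩
    rw [Module.Basis.extend_apply_self] at h1
    simpa [f] using h1
  · have h2 := (Module.Basis.extend hs).constr_basis K f ⟨w, hw⟩
    rw [Module.Basis.extend_apply_self] at h2
    simpa [f, Ne.symm huw] using h2

/-- The family H_xor(n,m,3) of random affine maps over 𝔽₂ is strongly 3-universal. -/
theorem stmt_3 (n m : ℕ)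
    (z : Fin 3 → (Fin n → ZMod 2)) (hz : Function.Injective z)
    (v : Fin 3 → (Fin m → ZMod 2)) :
    ((Finset.univ.filter
        (fun bA : (Fin m → ZMod 2) × Matrix (Fin m) (Fin n) (ZMod 2) =>
          ∀ i : Fin 3, bA.1 + bA.2.mulVec (z i) = v i)).card : ℝ)
      / (Finset.univ : Finset ((Fin m → ZMod 2) × Matrix (Fin m) (Fin n) (ZMod 2))).card
      = (2 : ℝ) ^ (-(3 * m : ℤ)) := by
  classical
  -- the evaluation map is linear
  let Φ : ((Fin m → ZMod 2) × Matrix (Fin m) (Fin n) (ZMod 2)) →ₗ[ZMod 2]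
      (Fin 3 → Fin m → ZMod 2) :=
    { toFun := fun bA i => bA.1 + bA.2.mulVec (z i)
      map_add' := by
        intro x y; funext i j
        simp [Matrix.add_mulVec]; abel
      map_smul' := by
        intro c x; funext i j
        simp only [Prod.smul_fst, Prod.smul_snd, Pi.smul_apply, smul_eq_mul,
          Matrix.smul_mulVec, Pi.add_apply, RingHom.id_apply]
        ring }
  have hΦ : ∀ bA, Φ bA = fun i => bA.1 + bA.2.mulVec (z i) := fun _ => rfl
  have hadd : ∀ x : Fin n → ZMod 2, x + x = 0 := by
    intro x; funext j
    have : ∀ a : ZMod 2, a + a = 0 := by decide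
    exact this _
  have hzne : ∀ i j : Fin 3, i ≠ j → z i ≠ z j := fun i j hij h => hij (hz h)
  -- linear independence of the two difference vectors
  have hli : LinearIndependent (ZMod 2) ![z 1 - z 0, z 2 - z 0] := by
    rw [LinearIndependent.pair_iff]
    intro s t hst
    have h01 : ∀ a : ZMod 2, a = 0 ∨ a = 1 := by decide
    rcases h01 s with rfl | rfl <;> rcases h01 t with rfl | rfl
    · exact ⟨rfl, rfl⟩
    · exfalso
      simp only [zero_smul, one_smul, zero_add] at hst
      exact hzne 2 0 (by decide) (sub_eq_zero.mp hst)
    · exfalso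
      simp only [zero_smul, one_smul, add_zero] at hst
      exact hzne 1 0 (by decide) (sub_eq_zero.mp hst)
    · exfalso
      simp only [one_smul] at hst
      exact hzne 1 2 (by decide)
        (by linear_combination hst + hadd (z 0) - hadd (z 2))
  -- surjectivity
  have hsurj : Function.Surjective Φ := by
    intro y
    obtain ⟨g, hgu, hgw⟩ := exists_linearMap_pair hli (y 1 - y 0) (y 2 - y 0)
    let A : Matrix (Fin m) (Fin n) (ZMod 2) := LinearMap.toMatrix' g
    have hA : ∀ x, A.mulVec x = g x := by
      intro x
      rw [← Matrix.toLin'_apply, Matrix.toLin'_toMatrix']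
    refine ⟨(y 0 - g (z 0), A), ?_⟩
    rw [hΦ]
    funext i
    simp only [hA]
    have key : ∀ i : Fin 3, y 0 - g (z 0) + g (z i) = y i := by
      intro i
      have hall : ∀ k : Fin 3, k = 0 ∨ k = 1 ∨ k = 2 := by decide
      rcases hall i with rfl | rfl | rfl
      · abel
      · have h1 : g (z 1) - g (z 0) = y 1 - y 0 := by rw [← map_sub]; exact hgu
        have h2 : y 0 - g (z 0) + g (z 1) = y 0 + (g (z 1) - g (z 0)) := by abel
        rw [h2, h1]; abel
      · have h1 : g (z 2) - g (z 0) = y 2 - y 0 := by rw [← map_sub]; exact hgw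
        have h2 : y 0 - g (z 0) + g (z 2) = y 0 + (g (z 2) - g (z 0)) := by abel
        rw [h2, h1]; abel
    exact key i
  -- rewrite the filter via Φ
  have hpred : (univ.filter (fun bA : (Fin m → ZMod 2) × Matrix (Fin m) (Fin n) (ZMod 2) =>
        ∀ i : Fin 3, bA.1 + bA.2.mulVec (z i) = v i))
      = (univ.filter (fun bA => Φ bA = v)) :=
    Finset.filter_congr (fun x _ => ⟨fun h => funext h, fun h i => congrFun h i⟩)
  rw [hpred]
  set c := (univ.filter (fun bA : (Fin m → ZMod 2) × Matrix (Fin m) (Fin n) (ZMod 2) =>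
      Φ bA = v)).card with hc_def
  -- all fibers of Φ have the same cardinality
  have hfib : ∀ y, (univ.filter
      (fun x : (Fin m → ZMod 2) × Matrix (Fin m) (Fin n) (ZMod 2) => Φ x = y)).card = c := by
    intro y
    obtain ⟨x0, hx0⟩ := hsurj (y - v)
    rw [hc_def]
    apply Finset.card_bij (fun x _ => x - x0)
    · intro a ha
      simp only [mem_filter, mem_univ, true_and] at ha ⊢
      rw [map_sub, ha, hx0]; abel
    · intro a _ b _ hab
      exact sub_left_injective hab
    · intro b hb
      refine ⟨b + x0, ?_, by abel⟩
      simp only [mem_filter, mem_univ, true_and] at hb ⊢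
      rw [map_add, hb, hx0]; abel
  -- total count
  have htot : (univ : Finset ((Fin m → ZMod 2) × Matrix (Fin m) (Fin n) (ZMod 2))).card
      = 2 ^ (3 * m) * c := by
    rw [Finset.card_eq_sum_card_fiberwise (fun x _ => Finset.mem_univ (Φ x))]
    rw [Finset.sum_congr rfl (fun y _ => hfib y), Finset.sum_const, smul_eq_mul]
    congr 1
    rw [Finset.card_univ, Fintype.card_fun, Fintype.card_fun, ZMod.card,
      Fintype.card_fin, Fintype.card_fin, ← pow_mul, mul_comm m 3]
  have hpos : 0 < c := by
    obtain ⟨x0, hx0⟩ := hsurj v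
    exact Finset.card_pos.mpr ⟨x0, by simp [hx0]⟩
  rw [htot]
  have hc : (c : ℝ) ≠ 0 := Nat.cast_ne_zero.mpr hpos.ne'
  push_cast
  rw [zpow_neg, ← zpow_natCast (2 : ℝ) (3 * m)]
  push_cast
  field_simp
end

section
/- For any real p ∈ [0, 1/2) and natural number n, the probability of obtaining at least ⌈n/2⌉ heads in n independent tosses of a coin with heads-probability p satisfies: Σ_{k=⌈n/2⌉}^{n} C(n,k) · p^k · (1-p)^{n-k} ≤ ((1-p)/(1-2p)) · (√(4·p·(1-p)))^n. -/
/-- Binomial upper-tail bound: probability of at least ⌈n/2⌉ heads. -/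
theorem stmt_5 (p : ℝ) (hp0 : 0 ≤ p) (hp : p < 1 / 2) (n : ℕ) :
    ∑ k ∈ Finset.Icc ((n + 1) / 2) n, (n.choose k : ℝ) * p ^ k * (1 - p) ^ (n - k)
      ≤ ((1 - p) / (1 - 2 * p)) * (Real.sqrt (4 * p * (1 - p))) ^ n := by
  set q : ℝ := 1 - p with hqdef
  have hq0 : (0:ℝ) < q := by rw [hqdef]; linarith
  have hpq : p < q := by rw [hqdef]; linarith
  have hqp : (0:ℝ) < q - p := by linarith
  set m := (n + 1) / 2 with hmdef
  have hmn : m ≤ n := by omega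
  set r : ℝ := p / q with hrdef
  have hr0 : (0:ℝ) ≤ r := div_nonneg hp0 hq0.le
  have hr1 : r < 1 := (div_lt_one hq0).2 hpq
  have h1r : (0:ℝ) < 1 - r := by linarith
  set N := n + 1 - m with hNdef
  -- step 1: choose ≤ 2^n
  have step1 : ∀ k ∈ Finset.Icc m n, (n.choose k : ℝ) * p ^ k * q ^ (n - k)
      ≤ 2 ^ n * (p ^ k * q ^ (n - k)) := by
    intro k hk
    rw [Finset.mem_Icc] at hk
    have hk' : k ∈ Finset.range (n + 1) := Finset.mem_range.2 (by omega)
    have h := Finset.single_le_sum (f := fun i => n.choose i)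
      (fun i _ => Nat.zero_le _) hk'
    rw [Nat.sum_range_choose] at h
    have hc : (n.choose k : ℝ) ≤ 2 ^ n := by exact_mod_cast h
    rw [mul_assoc]
    exact mul_le_mul_of_nonneg_right hc
      (mul_nonneg (pow_nonneg hp0 _) (pow_nonneg hq0.le _))
  -- step 2: geometric factoring
  have step2 : ∑ k ∈ Finset.Icc m n, p ^ k * q ^ (n - k)
      = (p ^ m * q ^ (n - m)) * ∑ j ∈ Finset.range N, r ^ j := by
    rw [← Finset.Ico_add_one_right_eq_Icc, Finset.sum_Ico_eq_sum_range, Finset.mul_sum]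
    apply Finset.sum_congr rfl
    intro j hj
    rw [Finset.mem_range] at hj
    have hjn : j ≤ n - m := by omega
    have h1 : n - (m + j) = (n - m) - j := by omega
    rw [h1, pow_sub₀ _ hq0.ne' hjn, pow_add, hrdef, div_pow]
    have hqj : (q:ℝ) ^ j ≠ 0 := pow_ne_zero _ hq0.ne'
    field_simp
  -- step 3: geometric sum bound
  have step3 : ∑ j ∈ Finset.range N, r ^ j ≤ 1 / (1 - r) := by
    have key : ∑ j ∈ Finset.range N, r ^ j = (1 - r ^ N) / (1 - r) := by
      rw [geom_sum_eq hr1.ne, div_eq_div_iff (by linarith) (by linarith)]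
      ring
    rw [key]
    have hrN : (0:ℝ) ≤ r ^ N := pow_nonneg hr0 N
    gcongr
    · nlinarith [pow_nonneg hr0 N]
  -- step 4: key inequality
  have step4 : (2:ℝ) ^ n * (p ^ m * q ^ (n - m)) ≤ (Real.sqrt (4 * p * q)) ^ n := by
    have h4 : (0:ℝ) ≤ 4 * p * q := by positivity
    have hL0 : (0:ℝ) ≤ 2 ^ n * (p ^ m * q ^ (n - m)) := by positivity
    have hR0 : (0:ℝ) ≤ (Real.sqrt (4 * p * q)) ^ n := pow_nonneg (Real.sqrt_nonneg _) n
    have hsq : ((Real.sqrt (4 * p * q)) ^ n) ^ 2 = (4 * p * q) ^ n := by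
      rw [← pow_mul, mul_comm n 2, pow_mul, Real.sq_sqrt h4]
    rw [← pow_le_pow_iff_left₀ hL0 hR0 (two_ne_zero), hsq]
    -- (2^n * (p^m * q^(n-m)))^2 ≤ (4pq)^n
    set d := 2 * m - n with hddef
    have hdn : d ≤ n := by omega
    have h2m : 2 * m = n + d := by omega
    have h2nm : 2 * (n - m) = n - d := by omega
    have key : p ^ (2 * m) * q ^ (2 * (n - m)) ≤ p ^ n * q ^ n := by
      rw [h2m, h2nm, pow_add]
      have hq' : q ^ n = q ^ d * q ^ (n - d) := by rw [← pow_add]; congr 1; omega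
      calc p ^ n * p ^ d * q ^ (n - d)
          ≤ p ^ n * q ^ d * q ^ (n - d) := by
            apply mul_le_mul_of_nonneg_right _ (pow_nonneg hq0.le _)
            exact mul_le_mul_of_nonneg_left (pow_le_pow_left₀ hp0 hpq.le d)
              (pow_nonneg hp0 _)
        _ = p ^ n * q ^ n := by rw [hq', mul_assoc]
    calc ((2:ℝ) ^ n * (p ^ m * q ^ (n - m))) ^ 2
        = 4 ^ n * (p ^ (2 * m) * q ^ (2 * (n - m))) := by
          rw [mul_pow, mul_pow, ← pow_mul, ← pow_mul, ← pow_mul]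
          have h24 : (2:ℝ) ^ (n * 2) = 4 ^ n := by rw [mul_comm, pow_mul]; norm_num
          rw [h24]; ring
      _ ≤ 4 ^ n * (p ^ n * q ^ n) := by
          apply mul_le_mul_of_nonneg_left key (by positivity)
      _ = (4 * p * q) ^ n := by rw [mul_pow, mul_pow]; ring
  -- assemble
  have h2p : (1:ℝ) - 2 * p = q - p := by rw [hqdef]; ring
  have hrq : 1 / (1 - r) = q / (q - p) := by
    rw [hrdef]
    have h : 1 - r = (q - p) / q := by rw [hrdef]; field_simp
    rw [h, one_div_div]
  calc ∑ k ∈ Finset.Icc m n, (n.choose k : ℝ) * p ^ k * q ^ (n - k)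
      ≤ ∑ k ∈ Finset.Icc m n, 2 ^ n * (p ^ k * q ^ (n - k)) :=
        Finset.sum_le_sum step1
    _ = 2 ^ n * ((p ^ m * q ^ (n - m)) * ∑ j ∈ Finset.range N, r ^ j) := by
        rw [← Finset.mul_sum, step2]
    _ ≤ 2 ^ n * ((p ^ m * q ^ (n - m)) * (1 / (1 - r))) := by
        apply mul_le_mul_of_nonneg_left _ (by positivity)
        exact mul_le_mul_of_nonneg_left step3 (by positivity)
    _ = (2 ^ n * (p ^ m * q ^ (n - m))) * (q / (q - p)) := by rw [hrq]; ring
    _ ≤ (Real.sqrt (4 * p * q)) ^ n * (q / (q - p)) := by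
        apply mul_le_mul_of_nonneg_right step4 (by positivity)
    _ = (q / (1 - 2 * p)) * (Real.sqrt (4 * p * q)) ^ n := by rw [h2p]; ring
end

section
/- Let ε ∈ (0,1], r ≥ 1 a natural number, and pivot := ⌈2·r·(1+ε)·e^{1/3}/ε²⌉. Then for any positive integer N (the model count), ⌈log₂((1+ε)·N/pivot)⌉ ≤ ⌊log₂(N·ε²/(r·e^{1/3}))⌋; in particular, whenever the right-hand side is nonnegative there exists a natural number m' with ⌈log₂((1+ε)·N/pivot)⌉ ≤ m' ≤ ⌊log₂(N·ε²/(r·e^{1/3}))⌋. -/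
open Real

/-- Existence of a good bucket-count m': compatibility of the ceiling lower
bound with the floor upper bound, for pivot := ⌈2r(1+ε)e^{1/3}/ε²⌉. -/
theorem stmt_8 (ε : ℝ) (hε0 : 0 < ε) (hε1 : ε ≤ 1) (r : ℕ) (hr : 1 ≤ r) (N : ℕ) (hN : 0 < N)
    (pivot : ℤ) (hpivot : pivot = ⌈2 * r * (1 + ε) * Real.exp (1 / 3) / ε ^ 2⌉) :
    (⌈Real.logb 2 ((1 + ε) * N / pivot)⌉ ≤ ⌊Real.logb 2 (N * ε ^ 2 / (r * Real.exp (1 / 3)))⌋)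
    ∧ (0 ≤ ⌊Real.logb 2 (N * ε ^ 2 / (r * Real.exp (1 / 3)))⌋ →
        ∃ m' : ℕ, ⌈Real.logb 2 ((1 + ε) * N / pivot)⌉ ≤ (m' : ℤ)
          ∧ (m' : ℤ) ≤ ⌊Real.logb 2 (N * ε ^ 2 / (r * Real.exp (1 / 3)))⌋) := by
  have hr' : (1:ℝ) ≤ r := by exact_mod_cast hr
  have hr0 : (0:ℝ) < r := lt_of_lt_of_le one_pos hr'
  have hN' : (0:ℝ) < N := by exact_mod_cast hN
  have he : (0:ℝ) < Real.exp (1/3) := Real.exp_pos _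
  have hb : (0:ℝ) < 2 * r * (1 + ε) * Real.exp (1 / 3) / ε ^ 2 := by positivity
  have hp : 2 * r * (1 + ε) * Real.exp (1 / 3) / ε ^ 2 ≤ (pivot : ℝ) := by
    rw [hpivot]; exact Int.le_ceil _
  have hp0 : (0:ℝ) < (pivot : ℝ) := lt_of_lt_of_le hb hp
  set x : ℝ := (1 + ε) * N / pivot with hx
  set y : ℝ := N * ε ^ 2 / (r * Real.exp (1 / 3)) with hy
  have hx0 : 0 < x := by positivity
  have hkey : 2 * x ≤ y := by
    have h1 : 2 * x ≤ 2 * ((1 + ε) * N) / (2 * r * (1 + ε) * Real.exp (1 / 3) / ε ^ 2) := by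
      rw [hx, mul_div_assoc']
      exact div_le_div_of_nonneg_left (by positivity) hb hp
    have h2 : 2 * ((1 + ε) * N) / (2 * r * (1 + ε) * Real.exp (1 / 3) / ε ^ 2) = y := by
      rw [hy]; field_simp
    linarith [h1, h2 ▸ h1]
  have hlog : Real.logb 2 x + 1 ≤ Real.logb 2 y := by
    have : Real.logb 2 (2 * x) ≤ Real.logb 2 y :=
      Real.logb_le_logb_of_le (by norm_num) (by positivity) hkey
    rwa [Real.logb_mul (by norm_num) (ne_of_gt hx0),
      Real.logb_self_eq_one (by norm_num : (1:ℝ) < 2), add_comm] at this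
  have hmain : ⌈Real.logb 2 x⌉ ≤ ⌊Real.logb 2 y⌋ := by
    calc ⌈Real.logb 2 x⌉ ≤ ⌊Real.logb 2 x⌋ + 1 := Int.ceil_le_floor_add_one _
      _ = ⌊Real.logb 2 x + 1⌋ := by rw [Int.floor_add_one]
      _ ≤ ⌊Real.logb 2 y⌋ := Int.floor_le_floor hlog
  refine ⟨hmain, fun h0 => ?_⟩
  rcases le_or_gt (⌈Real.logb 2 x⌉) 0 with h | h
  · exact ⟨0, by simpa using h, by simpa using h0⟩
  · exact ⟨⌊Real.logb 2 y⌋.toNat, by rw [Int.toNat_of_nonneg h0]; exact hmain,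
      by rw [Int.toNat_of_nonneg h0]⟩
end
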